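/- Let G be a locally compact, second countable, Hausdorff, amenable topological group with left Haar measure m and let Φ be a left, right, or two-sided Følner sequence in G. Let A_i (i ∈ ℕ) be Borel subsets of G such that the density of each A_i with respect to Φ exists, the sequence i ↦ d_Φ(A_i) is summable, and the density of A₁ ∪ ⋯ ∪ A_n with respect to Φ exists for every n. Then there exist subsets A′_i ⊆ A_i with A_i ∖ A′_i contained in a compact set, such that the density with respect to Φ of C = ⋃_i A′_i exists and equals lim_{n→∞} d_Φ(A₁ ∪ ⋯ ∪ A_n). -/

import Mathlib

open MeasureTheory Filter Topology Set Pointwise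

noncomputable section

section Defs

variable {G : Type*}

/-- The left translate of a bounded continuous function: `(lTrans g f) x = f (g⁻¹ * x)`. -/
def lTrans [Group G] [TopologicalSpace G] [IsTopologicalGroup G] (g : G)
    (f : BoundedContinuousFunction G ℝ) : BoundedContinuousFunction G ℝ :=
  f.compContinuous ⟨fun x => g⁻¹ * x, continuous_mul_left g⁻¹⟩

/-- Amenability of a topological group: existence of a left-invariant mean on the
bounded continuous real-valued functions. -/
def HasLeftInvariantMean (G : Type*) [Group G] [TopologicalSpace G] [IsTopologicalGroup G] :
    Prop :=
  ∃ Λ : BoundedContinuousFunction G ℝ →ₗ[ℝ] ℝ,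
    Λ (BoundedContinuousFunction.const G 1) = 1 ∧
    (∀ f, (∀ x, 0 ≤ f x) → 0 ≤ Λ f) ∧
    (∀ (g : G) (f : BoundedContinuousFunction G ℝ), Λ (lTrans g f) = Λ f)

/-- A bounded continuous real-valued function on a topological group is almost periodic if
its set of left translates is relatively compact in the sup norm. -/
def AlmostPeriodic [Group G] [TopologicalSpace G] [IsTopologicalGroup G]
    (f : BoundedContinuousFunction G ℝ) : Prop :=
  IsCompact (closure (Set.range fun g : G => lTrans g f))

/-- A subset `S` of a topological group is (left) syndetic if `K * S = G` for some compact `K`. -/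
def SyndeticSet [Group G] [TopologicalSpace G] (S : Set G) : Prop :=
  ∃ K : Set G, IsCompact K ∧ K * S = Set.univ

/-- A subset `T` of a topological group is thick if every compact set has a
right translate inside `T`. -/
def ThickSet [Group G] [TopologicalSpace G] (T : Set G) : Prop :=
  ∀ K : Set G, IsCompact K → ∃ g : G, (fun k => k * g) '' K ⊆ T

/-- A subset `P` of a topological group is piecewise syndetic if `K * P` is thick
for some compact `K`. -/
def PiecewiseSyndeticSet [Group G] [TopologicalSpace G] (P : Set G) : Prop :=
  ∃ K : Set G, IsCompact K ∧ ThickSet (K * P)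

/-- The increasing product `g k₁ * ⋯ * g k_m` over `α = {k₁ < ⋯ < k_m}`. -/
def incProd [Group G] (g : ℕ → G) (α : Finset ℕ) : G :=
  ((α.sort (· ≤ ·)).map g).prod

/-- The decreasing product `g k_m * ⋯ * g k₁` over `α = {k₁ < ⋯ < k_m}`. -/
def decProd [Group G] (g : ℕ → G) (α : Finset ℕ) : G :=
  (((α.sort (· ≤ ·)).map g).reverse).prod

/-- The increasing finite products set determined by the sequence `g`. -/
def FPi [Group G] (g : ℕ → G) : Set G :=
  {x | ∃ α : Finset ℕ, α.Nonempty ∧ x = incProd g α}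

/-- The two-sided finite products set determined by the sequence `g`. -/
def FP2 [Group G] (g : ℕ → G) : Set G :=
  {x | ∃ α β : Finset ℕ, Disjoint α β ∧ (α ∪ β).Nonempty ∧ x = incProd g α * decProd g β}

/-- The von Neumann kernel: the intersection of the kernels of all continuous
finite-dimensional unitary representations. -/
def vnKernel (G : Type*) [Group G] [TopologicalSpace G] : Subgroup G :=
  ⨅ (n : ℕ)
    (φ : G →* unitary (EuclideanSpace ℂ (Fin n) →L[ℂ] EuclideanSpace ℂ (Fin n)))
    (_ : Continuous φ), φ.ker

/-- A topological group is WM (minimally almost periodic) if it has no non-trivial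
continuous finite-dimensional unitary representations. -/
def IsWM (G : Type*) [Group G] [TopologicalSpace G] : Prop :=
  ∀ (n : ℕ)
    (φ : G →* unitary (EuclideanSpace ℂ (Fin n) →L[ℂ] EuclideanSpace ℂ (Fin n))),
    Continuous φ → ∀ g : G, φ g = 1

/-- A topological group is WM-by-compact if it has a closed normal WM subgroup that
is cocompact. -/
def WMByCompact (G : Type*) [Group G] [TopologicalSpace G] : Prop :=
  ∃ H : Subgroup G, H.Normal ∧ IsClosed (H : Set G) ∧ IsWM H ∧ CompactSpace (G ⧸ H)

variable [Group G] [TopologicalSpace G] [MeasurableSpace G]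

/-- The ratio `m (E ∩ Φ N) / m (Φ N)`. -/
def densFrac (m : Measure G) (Φ : ℕ → Set G) (E : Set G) (N : ℕ) : ℝ :=
  (m (E ∩ Φ N)).toReal / (m (Φ N)).toReal

/-- A left Følner sequence: compact positive-measure sets with
`m (Φ N ∩ g • Φ N) / m (Φ N) → 1` uniformly on compact sets of `g`. -/
def IsLeftFolner (m : Measure G) (Φ : ℕ → Set G) : Prop :=
  (∀ N, IsCompact (Φ N)) ∧ (∀ N, 0 < m (Φ N)) ∧
    ∀ K : Set G, IsCompact K → ∀ ε : ℝ, 0 < ε → ∃ N₀ : ℕ, ∀ N ≥ N₀, ∀ g ∈ K,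
      |(m (Φ N ∩ g • Φ N)).toReal / (m (Φ N)).toReal - 1| < ε

/-- A right Følner sequence: compact positive-measure sets with
`m (Φ N * g ∩ Φ N) / m (Φ N) → 1` uniformly on compact sets of `g`. -/
def IsRightFolner (m : Measure G) (Φ : ℕ → Set G) : Prop :=
  (∀ N, IsCompact (Φ N)) ∧ (∀ N, 0 < m (Φ N)) ∧
    ∀ K : Set G, IsCompact K → ∀ ε : ℝ, 0 < ε → ∃ N₀ : ℕ, ∀ N ≥ N₀, ∀ g ∈ K,
      |(m ((fun x => x * g) '' Φ N ∩ Φ N)).toReal / (m (Φ N)).toReal - 1| < ε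

/-- A two-sided Følner sequence is both a left and a right Følner sequence. -/
def IsTwoSidedFolner (m : Measure G) (Φ : ℕ → Set G) : Prop :=
  IsLeftFolner m Φ ∧ IsRightFolner m Φ

/-- Upper density of `E` with respect to a Følner sequence `Φ`. -/
def upperDensSet (m : Measure G) (Φ : ℕ → Set G) (E : Set G) : ℝ :=
  Filter.limsup (densFrac m Φ E) Filter.atTop

/-- Lower density of `E` with respect to a Følner sequence `Φ`. -/
def lowerDensSet (m : Measure G) (Φ : ℕ → Set G) (E : Set G) : ℝ :=
  Filter.liminf (densFrac m Φ E) Filter.atTop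

/-- `Δ` is the modular function of the left Haar measure `m`: a continuous positive
homomorphism with `map (· * g) m = Δ g • m`. -/
def IsModularFunction (m : Measure G) (Δ : G → ℝ) : Prop :=
  Continuous Δ ∧ (∀ g, 0 < Δ g) ∧ (∀ g h, Δ (g * h) = Δ g * Δ h) ∧
    ∀ g : G, Measure.map (fun x => x * g) m = ENNReal.ofReal (Δ g) • m

/-- A left Reiter sequence in `L¹(G, m)`. -/
def IsLeftReiter (m : Measure G) (Φ : ℕ → G → ℝ) : Prop :=
  (∀ N x, 0 ≤ Φ N x) ∧ (∀ N, Integrable (Φ N) m) ∧ (∀ N, ∫ x, Φ N x ∂m = 1) ∧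
    ∀ g : G, Tendsto (fun N => ∫ x, |Φ N (g⁻¹ * x) - Φ N x| ∂m) atTop (nhds 0)

/-- A two-sided Reiter sequence in `L¹(G, m)`. -/
def IsTwoSidedReiter (m : Measure G) (Φ : ℕ → G → ℝ) : Prop :=
  IsLeftReiter m Φ ∧
    ∃ Δ : G → ℝ, IsModularFunction m Δ ∧
      ∀ g : G, Tendsto (fun N => ∫ x, |Δ g * Φ N (x * g) - Φ N x| ∂m) atTop (nhds 0)

/-- Upper density of `E` with respect to a Reiter sequence `Φ`. -/
def upperDensReiter (m : Measure G) (Φ : ℕ → G → ℝ) (E : Set G) : ℝ :=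
  Filter.limsup (fun N => ∫ x in E, Φ N x ∂m) Filter.atTop

/-- A substantial subset of `G`: one containing `U * W * U` for some open neighbourhood
`U` of the identity and some measurable `W` of positive upper density with respect to
some two-sided Reiter sequence. -/
def SubstantialSet (m : Measure G) (S : Set G) : Prop :=
  ∃ U W : Set G, IsOpen U ∧ (1 : G) ∈ U ∧ MeasurableSet W ∧
    (∃ Φ : ℕ → G → ℝ, IsTwoSidedReiter m Φ ∧ 0 < upperDensReiter m Φ W) ∧
    U * W * U ⊆ S

/-- Two-sided upper Banach density. -/
def upperBanachDens (m : Measure G) (E : Set G) : ℝ :=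
  sSup {d : ℝ | ∃ Φ : ℕ → G → ℝ, IsTwoSidedReiter m Φ ∧ d = upperDensReiter m Φ E}

/-- A set of measurable recurrence in a topological group. -/
def IsRecurrenceSet (R : Set G) : Prop :=
  ∀ K : Set G, IsCompact K →
    ∀ (X : Type) [MeasurableSpace X] [MeasurableSpace.CountablyGenerated X]
      (μ : Measure X) [IsProbabilityMeasure μ] (T : G → X → X),
      Measurable (fun p : G × X => T p.1 p.2) →
      (∀ g : G, MeasurePreserving (T g) μ μ) →
      (∀ g h : G, ∀ x : X, T g (T h x) = T (g * h) x) →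
      (∀ x : X, T 1 x = x) →
      ∀ A : Set X, MeasurableSet A → 0 < μ A →
        ∃ g ∈ R \ K, 0 < μ (A ∩ T g ⁻¹' A)

end Defs

set_option linter.unusedSectionVars false
set_option linter.deprecated false
set_option linter.unusedVariables false
set_option maxHeartbeats 1000000
open scoped ENNReal NNReal

section A
variable {G : Type*} [Group G] [TopologicalSpace G] [IsTopologicalGroup G]

lemma st19_exists_sep {S : Set G}
    (hS : ∀ Q : Set G, IsCompact Q → ∃ x ∈ S, x ∉ Q) (t : G → Set G)
    (ht : ∀ x, IsCompact (t x)) (hsymm : ∀ x y, x ∈ t y → y ∈ t x) (k : ℕ) :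
    ∃ g : Fin k → G, (∀ i, g i ∈ S) ∧ ∀ i j, i ≠ j → g i ∉ t (g j) := by
  induction k with
  | zero => exact ⟨fun i => i.elim0, fun i => i.elim0, fun i => i.elim0⟩
  | succ n ih =>
    obtain ⟨g, hgS, hgsep⟩ := ih
    obtain ⟨x, hxS, hx⟩ := hS (⋃ i, t (g i)) (isCompact_iUnion fun i => ht _)
    simp only [Set.mem_iUnion, not_exists] at hx
    refine ⟨Fin.snoc g x, ?_, ?_⟩
    · intro i
      induction i using Fin.lastCases with
      | last => simpa [Fin.snoc_last] using hxS
      | cast i => simpa [Fin.snoc_castSucc] using hgS i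
    · intro i j hij
      induction i using Fin.lastCases with
      | last =>
        induction j using Fin.lastCases with
        | last => exact absurd rfl hij
        | cast j => simpa [Fin.snoc_last, Fin.snoc_castSucc] using hx j
      | cast i =>
        induction j using Fin.lastCases with
        | last =>
          simp only [Fin.snoc_last, Fin.snoc_castSucc]
          intro hmem
          exact hx i (hsymm _ _ hmem)
        | cast j =>
          simp only [Fin.snoc_castSucc]
          refine hgsep i j (fun h => hij ?_)
          rw [h]
end A

section B
variable {G : Type*} [Group G] [TopologicalSpace G] [IsTopologicalGroup G]
  [MeasurableSpace G] [BorelSpace G] [T2Space G] {m : Measure G} [IsFiniteMeasureOnCompacts m]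

lemma st19_densFrac_nonneg (Φ : ℕ → Set G) (E : Set G) (N : ℕ) :
    0 ≤ densFrac m Φ E N := div_nonneg ENNReal.toReal_nonneg ENNReal.toReal_nonneg

lemma st19_densFrac_le_one (Φ : ℕ → Set G) (hc : ∀ N, IsCompact (Φ N))
    (E : Set G) (N : ℕ) : densFrac m Φ E N ≤ 1 := by
  apply div_le_one_of_le₀
  · exact ENNReal.toReal_mono (hc N).measure_lt_top.ne (measure_mono inter_subset_right)
  · exact ENNReal.toReal_nonneg

lemma st19_densFrac_mono (Φ : ℕ → Set G) (hc : ∀ N, IsCompact (Φ N))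
    {E F : Set G} (h : E ⊆ F) (N : ℕ) : densFrac m Φ E N ≤ densFrac m Φ F N :=
  div_le_div_of_nonneg_right
    (ENNReal.toReal_mono ((measure_mono inter_subset_right).trans_lt
        (hc N).measure_lt_top).ne
      (measure_mono (inter_subset_inter_left _ h))) ENNReal.toReal_nonneg

lemma st19_count {Φ : Set G} (h0 : m Φ ≠ 0) (htop : m Φ ≠ ⊤)
    {k : ℕ} (D : Fin k → Set G) (hmeas : ∀ i, MeasurableSet (D i))
    (hsub : ∀ i, D i ⊆ Φ) (hdisj : Pairwise (Function.onFun Disjoint D))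
    {δ' : ℝ} (hlow : ∀ i, δ' * (m Φ).toReal ≤ (m (D i)).toReal) :
    (k : ℝ) * δ' ≤ 1 := by
  have hr : 0 < (m Φ).toReal := ENNReal.toReal_pos h0 htop
  have hU : m (⋃ i, D i) ≤ m Φ := measure_mono (Set.iUnion_subset hsub)
  have hsum : ∑ i : Fin k, m (D i) = m (⋃ i, D i) := by
    rw [measure_iUnion hdisj hmeas, tsum_fintype]
  have hfin : ∀ i : Fin k, m (D i) ≠ ⊤ :=
    fun i => ((measure_mono (hsub i)).trans_lt htop.lt_top).ne
  have h2 : ∑ i : Fin k, (m (D i)).toReal ≤ (m Φ).toReal := by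
    rw [← ENNReal.toReal_sum (fun i _ => hfin i)]
    exact ENNReal.toReal_mono htop (hsum ▸ hU)
  have h3 : (k : ℝ) * (δ' * (m Φ).toReal) ≤ ∑ i : Fin k, (m (D i)).toReal := by
    calc (k : ℝ) * (δ' * (m Φ).toReal) = ∑ _i : Fin k, δ' * (m Φ).toReal := by
          simp [Finset.sum_const, Finset.card_univ, mul_comm]
      _ ≤ ∑ i : Fin k, (m (D i)).toReal := Finset.sum_le_sum fun i _ => hlow i
  have := h3.trans h2
  nlinarith
end B



section C
variable {G : Type*} [Group G] [TopologicalSpace G] [IsTopologicalGroup G]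
  [LocallyCompactSpace G] [SecondCountableTopology G] [T2Space G]
  [MeasurableSpace G] [BorelSpace G]

lemma st19_left_core (m : Measure G) [m.IsHaarMeasure]
    (hG : ¬ CompactSpace G) {Φ : ℕ → Set G}
    (hc : ∀ N, IsCompact (Φ N)) (hp : ∀ N, 0 < m (Φ N))
    (hfol : ∀ K : Set G, IsCompact K → ∀ ε : ℝ, 0 < ε → ∃ N₀ : ℕ, ∀ N ≥ N₀, ∀ g ∈ K,
      |(m (Φ N ∩ g • Φ N)).toReal / (m (Φ N)).toReal - 1| < ε)
    {C : Set G} (hC : IsCompact C) (δ : ℝ) (hδ : 0 < δ) :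
    ∃ N₀ : ℕ, ∀ N ≥ N₀, (m (C ∩ Φ N)).toReal / (m (Φ N)).toReal < δ := by
  classical
  set k : ℕ := ⌈2 / δ⌉₊ + 1 with hk
  have hSuniv : ∀ Q : Set G, IsCompact Q → ∃ x ∈ (Set.univ : Set G), x ∉ Q := by
    intro Q hQ
    by_contra h
    push_neg at h
    refine hG ⟨?_⟩
    rwa [eq_univ_iff_forall.2 (fun x => h x trivial)] at hQ
  have hsymm : ∀ x y : G, x ∈ C * C⁻¹ * {y} → y ∈ C * C⁻¹ * {x} := by
    intro x y hx
    rw [Set.mul_singleton] at hx ⊢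
    obtain ⟨a, ha, rfl⟩ := hx
    have ha' : a⁻¹ ∈ C * C⁻¹ := by
      have : a⁻¹ ∈ (C * C⁻¹)⁻¹ := Set.inv_mem_inv.mpr ha
      rwa [mul_inv_rev, inv_inv] at this
    exact ⟨a⁻¹, ha', by group⟩
  obtain ⟨g, -, hsep⟩ := st19_exists_sep hSuniv (fun x => C * C⁻¹ * {x})
    (fun x => (hC.mul hC.inv).mul isCompact_singleton) hsymm k
  obtain ⟨N₀, hN₀⟩ := hfol (Set.range g) (Set.finite_range g).isCompact (δ/2) (by positivity)
  refine ⟨N₀, fun N hN => ?_⟩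
  by_contra hcontra
  push_neg at hcontra
  set r : ℝ := (m (Φ N)).toReal with hrdef
  have hr : 0 < r := ENNReal.toReal_pos (hp N).ne' (hc N).measure_lt_top.ne
  have hnum : δ * r ≤ (m (C ∩ Φ N)).toReal := (le_div_iff₀ hr).1 hcontra
  -- facts for each point
  have hgΦ : ∀ i : Fin k, g i • Φ N = (fun x => (g i)⁻¹ * x) ⁻¹' (Φ N) := by
    intro i
    ext x
    simp [Set.mem_smul_set_iff_inv_smul_mem, smul_eq_mul]
  have hmeasg : ∀ i : Fin k, MeasurableSet (g i • Φ N) := by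
    intro i
    rw [hgΦ i]
    exact (hc N).measurableSet.preimage (measurable_const_mul _)
  have hfintop : ∀ i : Fin k, m (C ∩ g i • Φ N) ≠ ⊤ :=
    fun i => ((measure_mono inter_subset_left).trans_lt hC.measure_lt_top).ne
  have hdifftop : ∀ i : Fin k, m (Φ N \ g i • Φ N) ≠ ⊤ :=
    fun i => ((measure_mono diff_subset).trans_lt (hc N).measure_lt_top).ne
  have hlow : ∀ i : Fin k, δ/2 * r ≤ (m (C ∩ g i • Φ N)).toReal := by
    intro i
    have hfi := hN₀ N hN (g i) (Set.mem_range_self i)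
    have h1 : (1 - δ/2) * r < (m (Φ N ∩ g i • Φ N)).toReal := by
      have := (abs_lt.1 hfi).1
      have h2 : 1 - δ/2 < (m (Φ N ∩ g i • Φ N)).toReal / r := by linarith
      exact (lt_div_iff₀ hr).1 h2
    have hdiff : (m (Φ N \ g i • Φ N)).toReal < δ/2 * r := by
      have hd : m (Φ N \ g i • Φ N) = m (Φ N) - m (Φ N ∩ g i • Φ N) := by
        rw [← Set.diff_self_inter]
        exact measure_diff inter_subset_left
          ((hc N).measurableSet.inter (hmeasg i)).nullMeasurableSet
          ((measure_mono inter_subset_left).trans_lt (hc N).measure_lt_top).ne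
      rw [hd, ENNReal.toReal_sub_of_le (measure_mono inter_subset_left)
        (hc N).measure_lt_top.ne]
      linarith
    have hsplit : (m (C ∩ Φ N)).toReal ≤
        (m (C ∩ g i • Φ N)).toReal + (m (Φ N \ g i • Φ N)).toReal := by
      have hsub : C ∩ Φ N ⊆ (C ∩ g i • Φ N) ∪ (Φ N \ g i • Φ N) := by
        intro x ⟨hxC, hxΦ⟩
        by_cases hx : x ∈ g i • Φ N
        · exact Or.inl ⟨hxC, hx⟩
        · exact Or.inr ⟨hxΦ, hx⟩
      calc (m (C ∩ Φ N)).toReal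
          ≤ (m (C ∩ g i • Φ N) + m (Φ N \ g i • Φ N)).toReal :=
            ENNReal.toReal_mono (ENNReal.add_ne_top.2 ⟨hfintop i, hdifftop i⟩)
              ((measure_mono hsub).trans (measure_union_le _ _))
        _ = _ := ENNReal.toReal_add (hfintop i) (hdifftop i)
    linarith
  -- the disjoint family
  set D : Fin k → Set G := fun i => (fun x => g i * x) ⁻¹' C ∩ Φ N with hD
  have hmeasD : ∀ i, MeasurableSet (D i) :=
    fun i => (hC.measurableSet.preimage (measurable_const_mul _)).inter (hc N).measurableSet
  have hDeq : ∀ i, m (D i) = m (C ∩ g i • Φ N) := by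
    intro i
    have : D i = (fun x => g i * x) ⁻¹' (C ∩ g i • Φ N) := by
      ext x
      simp only [hD, Set.mem_inter_iff, Set.mem_preimage]
      constructor
      · rintro ⟨h1, h2⟩
        exact ⟨h1, Set.smul_mem_smul_set h2⟩
      · rintro ⟨h1, h2⟩
        refine ⟨h1, ?_⟩
        have h2' : (g i) • x ∈ (g i) • Φ N := h2
        rwa [Set.smul_mem_smul_set_iff] at h2'
    rw [this, measure_preimage_mul]
  have hdisj : Pairwise (Function.onFun Disjoint D) := by
    intro i j hij
    rw [Function.onFun, Set.disjoint_left]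
    rintro x ⟨hxi, hxΦ⟩ ⟨hxj, hxΦ'⟩
    refine hsep i j hij ?_
    rw [Set.mul_singleton]
    refine ⟨(g i * x) * (g j * x)⁻¹, Set.mul_mem_mul hxi (Set.inv_mem_inv.mpr hxj), by group⟩
  have hcount : (k : ℝ) * (δ/2) ≤ 1 := by
    refine st19_count (m := m) (hp N).ne' (hc N).measure_lt_top.ne D hmeasD
      (fun i => inter_subset_right) hdisj (fun i => ?_)
    rw [hDeq i]
    exact hlow i
  have hceil : (2 / δ : ℝ) ≤ (⌈2/δ⌉₊ : ℝ) := Nat.le_ceil _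
  have hkk : (2/δ + 1 : ℝ) ≤ (k : ℝ) := by
    rw [hk]
    push_cast
    linarith
  have hone : (2/δ) * (δ/2) = 1 := by field_simp
  nlinarith
end C

section D
variable {G : Type*} [Group G] [TopologicalSpace G] [IsTopologicalGroup G]
  [LocallyCompactSpace G] [SecondCountableTopology G] [T2Space G]
  [MeasurableSpace G] [BorelSpace G]

lemma st19_modular (m : Measure G) [m.IsHaarMeasure] :
    ∃ Δ : G → ℝ≥0∞, (∀ g, Δ g ≠ ⊤) ∧ (∀ g, Δ g * Δ g⁻¹ = 1) ∧
      ∀ (g : G) (S : Set G), MeasurableSet S → m ((fun x => x * g) ⁻¹' S) = Δ g * m S := by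
  classical
  set Δ : G → ℝ≥0∞ := fun g => ((m.map (· * g)).haarScalarFactor m : ℝ≥0∞) with hΔ
  have key : ∀ (g : G) (S : Set G), MeasurableSet S →
      m ((fun x => x * g) ⁻¹' S) = Δ g * m S := by
    intro g S hS
    have h1 : m.map (· * g) = Δ g • m := Measure.isMulLeftInvariant_eq_smul _ m
    have h2 : (m.map (· * g)) S = m ((fun x => x * g) ⁻¹' S) :=
      Measure.map_apply (measurable_mul_const g) hS
    rw [← h2, h1]
    simp
  refine ⟨Δ, fun g => ENNReal.coe_ne_top, fun g => ?_, key⟩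
  obtain ⟨K₀⟩ : Nonempty (TopologicalSpace.PositiveCompacts G) := inferInstance
  have hK0 : m (K₀ : Set G) ≠ 0 :=
    (Measure.measure_pos_of_nonempty_interior m K₀.interior_nonempty).ne'
  have hKtop : m (K₀ : Set G) ≠ ⊤ := K₀.isCompact.measure_lt_top.ne
  have hmeasK : MeasurableSet (K₀ : Set G) := K₀.isCompact.measurableSet
  have e1 : m ((fun x => x * g) ⁻¹' (K₀ : Set G)) = Δ g * m (K₀ : Set G) := key g _ hmeasK
  have e2 : m ((fun x => x * g⁻¹) ⁻¹' ((fun x => x * g) ⁻¹' (K₀ : Set G)))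
      = Δ g⁻¹ * (Δ g * m (K₀ : Set G)) := by
    rw [key g⁻¹ _ (hmeasK.preimage (measurable_mul_const g)), e1]
  have e3 : (fun x => x * g⁻¹) ⁻¹' ((fun x => x * g) ⁻¹' (K₀ : Set G)) = (K₀ : Set G) := by
    ext x
    simp
  rw [e3] at e2
  have h4 : (1 : ℝ≥0∞) * m (K₀ : Set G) = (Δ g * Δ g⁻¹) * m (K₀ : Set G) := by
    rw [one_mul]
    nth_rewrite 1 [e2]
    ring
  exact ((ENNReal.mul_left_inj hK0 hKtop).1 h4).symm

lemma st19_right_core (m : Measure G) [m.IsHaarMeasure]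
    (hG : ¬ CompactSpace G) {Φ : ℕ → Set G}
    (hc : ∀ N, IsCompact (Φ N)) (hp : ∀ N, 0 < m (Φ N))
    (hfol : ∀ K : Set G, IsCompact K → ∀ ε : ℝ, 0 < ε → ∃ N₀ : ℕ, ∀ N ≥ N₀, ∀ g ∈ K,
      |(m ((fun x => x * g) '' Φ N ∩ Φ N)).toReal / (m (Φ N)).toReal - 1| < ε)
    {C : Set G} (hC : IsCompact C) (δ : ℝ) (hδ : 0 < δ) :
    ∃ N₀ : ℕ, ∀ N ≥ N₀, (m (C ∩ Φ N)).toReal / (m (Φ N)).toReal < δ := by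
  classical
  obtain ⟨Δ, hΔtop, hΔmul, hΔ⟩ := st19_modular m
  set k : ℕ := ⌈2 / δ⌉₊ + 1 with hk
  set S : Set G := {g : G | 1 ≤ Δ g} with hSdef
  have hSnc : ∀ Q : Set G, IsCompact Q → ∃ x ∈ S, x ∉ Q := by
    intro Q hQ
    by_contra h
    push_neg at h
    apply hG
    have huniv : (Set.univ : Set G) = Q ∪ Q⁻¹ := by
      refine (Set.eq_univ_of_forall ?_).symm
      intro x
      rcases le_total 1 (Δ x) with hx | hx
      · exact Or.inl (h x hx)
      · have hx' : (1 : ℝ≥0∞) ≤ Δ x⁻¹ := by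
          calc (1 : ℝ≥0∞) = Δ x * Δ x⁻¹ := (hΔmul x).symm
            _ ≤ 1 * Δ x⁻¹ := mul_le_mul_left hx _
            _ = Δ x⁻¹ := one_mul _
        exact Or.inr (by simpa [Set.mem_inv] using h x⁻¹ hx')
    exact isCompact_univ_iff.mp (by rw [huniv]; exact hQ.union hQ.inv)

  set B : Set G := C⁻¹ * C with hBdef
  have hBinv : B⁻¹ = B := by rw [hBdef, mul_inv_rev, inv_inv]
  have hsymm : ∀ x y : G, x ∈ {y} * B → y ∈ {x} * B := by
    intro x y hx
    rw [Set.singleton_mul] at hx ⊢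
    obtain ⟨a, ha, rfl⟩ := hx
    have ha' : a⁻¹ ∈ B := by
      rw [← hBinv]
      exact Set.inv_mem_inv.mpr ha
    exact ⟨a⁻¹, ha', by group⟩
  obtain ⟨g, hgS, hsep⟩ := st19_exists_sep hSnc (fun x => {x} * B)
    (fun x => isCompact_singleton.mul (hC.inv.mul hC)) hsymm k
  obtain ⟨N₀, hN₀⟩ := hfol (Set.range g) (Set.finite_range g).isCompact (δ/2) (by positivity)
  refine ⟨N₀, fun N hN => ?_⟩
  by_contra hcontra
  push_neg at hcontra
  set r : ℝ := (m (Φ N)).toReal with hrdef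
  have hr : 0 < r := ENNReal.toReal_pos (hp N).ne' (hc N).measure_lt_top.ne
  have hnum : δ * r ≤ (m (C ∩ Φ N)).toReal := (le_div_iff₀ hr).1 hcontra
  have hgΦ : ∀ i : Fin k, (fun x => x * g i) '' Φ N = (fun x => x * (g i)⁻¹) ⁻¹' (Φ N) := by
    intro i
    ext x
    simp only [Set.mem_image, Set.mem_preimage]
    constructor
    · rintro ⟨y, hy, rfl⟩
      simpa using hy
    · intro hx
      exact ⟨x * (g i)⁻¹, hx, by group⟩
  have hmeasg : ∀ i : Fin k, MeasurableSet ((fun x => x * g i) '' Φ N) := by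
    intro i
    rw [hgΦ i]
    exact (hc N).measurableSet.preimage (measurable_mul_const _)
  have hfintop : ∀ i : Fin k, m (C ∩ (fun x => x * g i) '' Φ N) ≠ ⊤ :=
    fun i => ((measure_mono inter_subset_left).trans_lt hC.measure_lt_top).ne
  have hdifftop : ∀ i : Fin k, m (Φ N \ (fun x => x * g i) '' Φ N) ≠ ⊤ :=
    fun i => ((measure_mono diff_subset).trans_lt (hc N).measure_lt_top).ne
  have hlow : ∀ i : Fin k, δ/2 * r ≤ (m (C ∩ (fun x => x * g i) '' Φ N)).toReal := by
    intro i
    have hfi := hN₀ N hN (g i) (Set.mem_range_self i)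
    have h1 : (1 - δ/2) * r < (m ((fun x => x * g i) '' Φ N ∩ Φ N)).toReal := by
      have := (abs_lt.1 hfi).1
      have h2 : 1 - δ/2 < (m ((fun x => x * g i) '' Φ N ∩ Φ N)).toReal / r := by linarith
      exact (lt_div_iff₀ hr).1 h2
    have hdiff : (m (Φ N \ (fun x => x * g i) '' Φ N)).toReal < δ/2 * r := by
      have hd : m (Φ N \ (fun x => x * g i) '' Φ N)
          = m (Φ N) - m ((fun x => x * g i) '' Φ N ∩ Φ N) := by
        rw [← Set.diff_inter_self_eq_diff]
        exact measure_diff inter_subset_right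
          ((hmeasg i).inter (hc N).measurableSet).nullMeasurableSet
          ((measure_mono inter_subset_right).trans_lt (hc N).measure_lt_top).ne
      rw [hd, ENNReal.toReal_sub_of_le (measure_mono inter_subset_right)
        (hc N).measure_lt_top.ne]
      linarith
    have hsplit : (m (C ∩ Φ N)).toReal ≤
        (m (C ∩ (fun x => x * g i) '' Φ N)).toReal
          + (m (Φ N \ (fun x => x * g i) '' Φ N)).toReal := by
      have hsub : C ∩ Φ N ⊆ (C ∩ (fun x => x * g i) '' Φ N)
          ∪ (Φ N \ (fun x => x * g i) '' Φ N) := by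
        intro x ⟨hxC, hxΦ⟩
        by_cases hx : x ∈ (fun x => x * g i) '' Φ N
        · exact Or.inl ⟨hxC, hx⟩
        · exact Or.inr ⟨hxΦ, hx⟩
      calc (m (C ∩ Φ N)).toReal
          ≤ (m (C ∩ (fun x => x * g i) '' Φ N)
              + m (Φ N \ (fun x => x * g i) '' Φ N)).toReal :=
            ENNReal.toReal_mono (ENNReal.add_ne_top.2 ⟨hfintop i, hdifftop i⟩)
              ((measure_mono hsub).trans (measure_union_le _ _))
        _ = _ := ENNReal.toReal_add (hfintop i) (hdifftop i)
    linarith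
  set D : Fin k → Set G := fun i => (fun x => x * g i) ⁻¹' C ∩ Φ N with hD
  have hmeasD : ∀ i, MeasurableSet (D i) :=
    fun i => (hC.measurableSet.preimage (measurable_mul_const _)).inter (hc N).measurableSet
  have hDtop : ∀ i, m (D i) ≠ ⊤ :=
    fun i => ((measure_mono inter_subset_right).trans_lt (hc N).measure_lt_top).ne
  have hDge : ∀ i, m (C ∩ (fun x => x * g i) '' Φ N) ≤ m (D i) := by
    intro i
    have heq : D i = (fun x => x * g i) ⁻¹' (C ∩ (fun x => x * g i) '' Φ N) := by
      ext x
      simp only [hD, Set.mem_inter_iff, Set.mem_preimage]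
      constructor
      · rintro ⟨h1, h2⟩
        exact ⟨h1, ⟨x, h2, rfl⟩⟩
      · rintro ⟨h1, h2⟩
        refine ⟨h1, ?_⟩
        obtain ⟨y, hy, hyx⟩ := h2
        have : y = x := mul_left_injective (g i) hyx
        rwa [← this]
    rw [heq, hΔ (g i) _ (hC.measurableSet.inter (hmeasg i))]
    calc m (C ∩ (fun x => x * g i) '' Φ N)
        = 1 * m (C ∩ (fun x => x * g i) '' Φ N) := (one_mul _).symm
      _ ≤ Δ (g i) * m (C ∩ (fun x => x * g i) '' Φ N) := mul_le_mul_left (hgS i) _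
  have hdisj : Pairwise (Function.onFun Disjoint D) := by
    intro i j hij
    rw [Function.onFun, Set.disjoint_left]
    rintro x ⟨hxi, hxΦ⟩ ⟨hxj, hxΦ'⟩
    refine hsep i j hij ?_
    rw [Set.singleton_mul]
    exact ⟨(x * g j)⁻¹ * (x * g i), Set.mul_mem_mul (Set.inv_mem_inv.mpr hxj) hxi, by group⟩
  have hcount : (k : ℝ) * (δ/2) ≤ 1 := by
    refine st19_count (m := m) (hp N).ne' (hc N).measure_lt_top.ne D hmeasD
      (fun i => inter_subset_right) hdisj (fun i => ?_)
    calc δ/2 * r ≤ (m (C ∩ (fun x => x * g i) '' Φ N)).toReal := hlow i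
      _ ≤ (m (D i)).toReal := ENNReal.toReal_mono (hDtop i) (hDge i)
  have hceil : (2 / δ : ℝ) ≤ (⌈2/δ⌉₊ : ℝ) := Nat.le_ceil _
  have hkk : (2/δ + 1 : ℝ) ≤ (k : ℝ) := by
    rw [hk]
    push_cast
    linarith
  have hone : (2/δ) * (δ/2) = 1 := by field_simp
  nlinarith
end D

section E
variable {G : Type*} [Group G] [TopologicalSpace G] [IsTopologicalGroup G]
  [LocallyCompactSpace G] [SecondCountableTopology G] [T2Space G]
  [MeasurableSpace G] [BorelSpace G]

lemma st19_right_invariant (m : Measure G) [m.IsHaarMeasure] [CompactSpace G] :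
    m.IsMulRightInvariant := by
  constructor
  intro g
  have h1 : m.map (· * g) = ((m.map (· * g)).haarScalarFactor m : ℝ≥0∞) • m :=
    Measure.isMulInvariant_eq_smul_of_compactSpace _ m
  have huniv : (m.map (· * g)) Set.univ = m Set.univ := by
    rw [Measure.map_apply (measurable_mul_const g) MeasurableSet.univ, Set.preimage_univ]
  have hm0 : m (Set.univ : Set G) ≠ 0 := (isOpen_univ.measure_pos m univ_nonempty).ne'
  have hmtop : m (Set.univ : Set G) ≠ ⊤ := isCompact_univ.measure_lt_top.ne
  have hc1 : ((m.map (· * g)).haarScalarFactor m : ℝ≥0∞) * m Set.univ = 1 * m Set.univ := by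
    have := congrArg (fun μ : Measure G => μ Set.univ) h1
    simp only [Measure.smul_apply, smul_eq_mul] at this
    rw [one_mul, ← this]
    exact huniv
  have : ((m.map (· * g)).haarScalarFactor m : ℝ≥0∞) = 1 :=
    (ENNReal.mul_left_inj hm0 hmtop).1 hc1
  rw [h1, this, one_smul]

lemma st19_inv_invariant (m : Measure G) [m.IsHaarMeasure] [CompactSpace G] :
    m.IsInvInvariant := by
  haveI := st19_right_invariant m
  haveI : IsFiniteMeasureOnCompacts m.inv := by
    constructor
    intro K hK
    rw [Measure.inv_apply]
    exact hK.inv.measure_lt_top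
  haveI : m.inv.IsMulLeftInvariant := inferInstance
  have h1 : m.inv = (m.inv.haarScalarFactor m : ℝ≥0∞) • m :=
    Measure.isMulInvariant_eq_smul_of_compactSpace _ m
  have huniv : m.inv Set.univ = m Set.univ := by rw [Measure.inv_apply, Set.inv_univ]
  have hm0 : m (Set.univ : Set G) ≠ 0 := (isOpen_univ.measure_pos m univ_nonempty).ne'
  have hmtop : m (Set.univ : Set G) ≠ ⊤ := isCompact_univ.measure_lt_top.ne
  have hc1 : (m.inv.haarScalarFactor m : ℝ≥0∞) * m Set.univ = 1 * m Set.univ := by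
    have := congrArg (fun μ : Measure G => μ Set.univ) h1
    simp only [Measure.smul_apply, smul_eq_mul] at this
    rw [one_mul, ← this]
    exact huniv
  have hone : (m.inv.haarScalarFactor m : ℝ≥0∞) = 1 :=
    (ENNReal.mul_left_inj hm0 hmtop).1 hc1
  constructor
  rw [h1, hone, one_smul]

lemma st19_lint_left (m : Measure G) [m.IsHaarMeasure] [CompactSpace G]
    {Φ : Set G} (hΦ : MeasurableSet Φ) :
    ∫⁻ g, m (Φ ∩ g • Φ) ∂m = m Φ * m Φ := by
  haveI : IsFiniteMeasure m := ⟨isCompact_univ.measure_lt_top⟩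
  haveI := st19_right_invariant m
  haveI := st19_inv_invariant m
  have mind : Measurable (Φ.indicator (1 : G → ℝ≥0∞)) := measurable_one.indicator hΦ
  have hsmulmeas : ∀ g : G, MeasurableSet (g • Φ) := by
    intro g
    have : g • Φ = (fun x => g⁻¹ * x) ⁻¹' Φ := by
      ext x
      simp [Set.mem_smul_set_iff_inv_smul_mem, smul_eq_mul]
    rw [this]
    exact hΦ.preimage (measurable_const_mul _)
  have h1 : ∀ g : G, m (Φ ∩ g • Φ)
      = ∫⁻ x, Φ.indicator 1 x * Φ.indicator 1 (g⁻¹ * x) ∂m := by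
    intro g
    rw [← lintegral_indicator_one (hΦ.inter (hsmulmeas g))]
    congr 1
    funext x
    have hx2' : (x ∈ g • Φ) ↔ g⁻¹ * x ∈ Φ := by
      simp [Set.mem_smul_set_iff_inv_smul_mem, smul_eq_mul]
    by_cases hx : x ∈ Φ <;> by_cases hx2 : g⁻¹ * x ∈ Φ <;>
      simp [Set.indicator_apply, Set.mem_inter_iff, hx2', hx, hx2]
  have hmeas2 : Measurable (Function.uncurry fun (g : G) (x : G) =>
      Φ.indicator (1 : G → ℝ≥0∞) x * Φ.indicator (1 : G → ℝ≥0∞) (g⁻¹ * x)) := by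
    apply Measurable.mul
    · exact mind.comp measurable_snd
    · exact mind.comp ((measurable_fst.inv).mul measurable_snd)
  calc ∫⁻ g, m (Φ ∩ g • Φ) ∂m
      = ∫⁻ g, ∫⁻ x, Φ.indicator 1 x * Φ.indicator 1 (g⁻¹ * x) ∂m ∂m := by
        simp_rw [h1]
    _ = ∫⁻ x, ∫⁻ g, Φ.indicator 1 x * Φ.indicator 1 (g⁻¹ * x) ∂m ∂m :=
        lintegral_lintegral_swap hmeas2.aemeasurable
    _ = ∫⁻ x, Φ.indicator 1 x * ∫⁻ g, Φ.indicator 1 (g⁻¹ * x) ∂m ∂m := by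
        congr 1
        funext x
        exact lintegral_const_mul _ (mind.comp ((measurable_inv).mul_const x))
    _ = ∫⁻ x, Φ.indicator 1 x * m Φ ∂m := by
        congr 1
        funext x
        congr 1
        have hrw : ∀ g : G, g⁻¹ * x = (x⁻¹ * g)⁻¹ := fun g => by group
        simp_rw [hrw]
        exact ((Measure.measurePreserving_mul_right_inv m x⁻¹).lintegral_comp mind).trans
          (lintegral_indicator_one hΦ)
    _ = m Φ * m Φ := by
        rw [lintegral_mul_const _ mind, lintegral_indicator_one hΦ, mul_comm]

lemma st19_lint_right (m : Measure G) [m.IsHaarMeasure] [CompactSpace G]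
    {Φ : Set G} (hΦ : MeasurableSet Φ) :
    ∫⁻ g, m ((fun x => x * g) '' Φ ∩ Φ) ∂m = m Φ * m Φ := by
  haveI : IsFiniteMeasure m := ⟨isCompact_univ.measure_lt_top⟩
  haveI := st19_right_invariant m
  haveI := st19_inv_invariant m
  have mind : Measurable (Φ.indicator (1 : G → ℝ≥0∞)) := measurable_one.indicator hΦ
  have himg : ∀ g : G, (fun x => x * g) '' Φ = (fun x => x * g⁻¹) ⁻¹' Φ := by
    intro g
    ext x
    simp only [Set.mem_image, Set.mem_preimage]
    constructor
    · rintro ⟨y, hy, rfl⟩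
      simpa using hy
    · intro hx
      exact ⟨x * g⁻¹, hx, by group⟩
  have hmeasim : ∀ g : G, MeasurableSet ((fun x => x * g) '' Φ) := by
    intro g
    rw [himg g]
    exact hΦ.preimage (measurable_mul_const _)
  have h1 : ∀ g : G, m ((fun x => x * g) '' Φ ∩ Φ)
      = ∫⁻ x, Φ.indicator 1 (x * g⁻¹) * Φ.indicator 1 x ∂m := by
    intro g
    rw [← lintegral_indicator_one ((hmeasim g).inter hΦ)]
    congr 1
    funext x
    have hx2' : (x ∈ (fun x => x * g) '' Φ) ↔ x * g⁻¹ ∈ Φ := by rw [himg g]; rfl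
    by_cases hx : x ∈ Φ <;> by_cases hx2 : x * g⁻¹ ∈ Φ <;>
      simp [Set.indicator_apply, Set.mem_inter_iff, hx2', hx, hx2]
  have hmeas2 : Measurable (Function.uncurry fun (g : G) (x : G) =>
      Φ.indicator (1 : G → ℝ≥0∞) (x * g⁻¹) * Φ.indicator (1 : G → ℝ≥0∞) x) := by
    apply Measurable.mul
    · exact mind.comp (measurable_snd.mul measurable_fst.inv)
    · exact mind.comp measurable_snd
  calc ∫⁻ g, m ((fun x => x * g) '' Φ ∩ Φ) ∂m
      = ∫⁻ g, ∫⁻ x, Φ.indicator 1 (x * g⁻¹) * Φ.indicator 1 x ∂m ∂m := by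
        simp_rw [h1]
    _ = ∫⁻ x, ∫⁻ g, Φ.indicator 1 (x * g⁻¹) * Φ.indicator 1 x ∂m ∂m :=
        lintegral_lintegral_swap hmeas2.aemeasurable
    _ = ∫⁻ x, (∫⁻ g, Φ.indicator 1 (x * g⁻¹) ∂m) * Φ.indicator 1 x ∂m := by
        congr 1
        funext x
        exact lintegral_mul_const _ (mind.comp ((measurable_const.mul measurable_inv)))
    _ = ∫⁻ x, m Φ * Φ.indicator 1 x ∂m := by
        congr 1
        funext x
        congr 1
        have hrw : ∀ g : G, x * g⁻¹ = x / g := fun g => (div_eq_mul_inv x g).symm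
        simp_rw [hrw]
        exact ((Measure.measurePreserving_div_left m x).lintegral_comp mind).trans
          (lintegral_indicator_one hΦ)
    _ = m Φ * m Φ := by
        rw [lintegral_const_mul _ mind, lintegral_indicator_one hΦ]
end E

section F
variable {G : Type*} [Group G] [TopologicalSpace G] [IsTopologicalGroup G]
  [LocallyCompactSpace G] [SecondCountableTopology G] [T2Space G]
  [MeasurableSpace G] [BorelSpace G]

lemma st19_compact_measure_aux (m : Measure G) [m.IsHaarMeasure] [CompactSpace G]
    {Φ : ℕ → Set G} (hc : ∀ N, IsCompact (Φ N))
    (hbound : ∀ ε' : ℝ, 0 < ε' → ε' ≤ 1/2 →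
      ∃ N₀, ∀ N ≥ N₀, ENNReal.ofReal (1 - ε') * m Set.univ ≤ m (Φ N)) :
    Tendsto (fun N => (m (Φ N)).toReal) atTop (𝓝 (m (Set.univ : Set G)).toReal) := by
  set u := (m (Set.univ : Set G)).toReal with hu_def
  have hu : 0 < u := ENNReal.toReal_pos
    (isOpen_univ.measure_pos m univ_nonempty).ne' isCompact_univ.measure_lt_top.ne
  rw [Metric.tendsto_atTop]
  intro ε hε
  set ε' : ℝ := min (ε / (u+1)) (1/2) with hε'def
  have hε'pos : 0 < ε' := lt_min (by positivity) (by norm_num)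
  obtain ⟨N₀, hN₀⟩ := hbound ε' hε'pos (min_le_right _ _)
  refine ⟨N₀, fun N hN => ?_⟩
  have h1 : (1-ε') * u ≤ (m (Φ N)).toReal := by
    have h2 := ENNReal.toReal_mono (hc N).measure_lt_top.ne (hN₀ N hN)
    rwa [ENNReal.toReal_mul, ENNReal.toReal_ofReal
      (by linarith [min_le_right (ε / (u+1)) (1/2 : ℝ)] : (0:ℝ) ≤ 1-ε')] at h2
  have h2 : (m (Φ N)).toReal ≤ u :=
    ENNReal.toReal_mono isCompact_univ.measure_lt_top.ne (measure_mono (subset_univ _))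
  rw [Real.dist_eq, abs_lt]
  constructor
  · have hεle : ε' ≤ ε/(u+1) := min_le_left _ _
    have h3 : ε' * u ≤ (ε/(u+1)) * u := mul_le_mul_of_nonneg_right hεle hu.le
    have h4 : (ε/(u+1)) * u < ε := by
      rw [div_mul_eq_mul_div, div_lt_iff₀ (by linarith : (0:ℝ) < u+1)]
      nlinarith
    nlinarith
  · linarith

lemma st19_compact_measure_tendsto (m : Measure G) [m.IsHaarMeasure] [CompactSpace G]
    {Φ : ℕ → Set G} (hF : IsLeftFolner m Φ ∨ IsRightFolner m Φ) :
    Tendsto (fun N => (m (Φ N)).toReal) atTop (𝓝 (m (Set.univ : Set G)).toReal) := by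
  have hc : ∀ N, IsCompact (Φ N) := hF.elim And.left And.left
  have hp : ∀ N, 0 < m (Φ N) := hF.elim (fun h => h.2.1) (fun h => h.2.1)
  apply st19_compact_measure_aux m hc
  intro ε' hε' hε'le
  have hr : ∀ N, 0 < (m (Φ N)).toReal :=
    fun N => ENNReal.toReal_pos (hp N).ne' (hc N).measure_lt_top.ne
  have key : ∀ N, (∀ g : G, ENNReal.ofReal (1-ε') * m (Φ N) ≤ m (Φ N ∩ g • Φ N)) →
      ENNReal.ofReal (1 - ε') * m Set.univ ≤ m (Φ N) := by
    intro N hall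
    have hint : (ENNReal.ofReal (1-ε') * m (Φ N)) * m Set.univ ≤ m (Φ N) * m (Φ N) := by
      calc (ENNReal.ofReal (1-ε') * m (Φ N)) * m Set.univ
          = ∫⁻ _, ENNReal.ofReal (1-ε') * m (Φ N) ∂m := (lintegral_const _).symm
        _ ≤ ∫⁻ g, m (Φ N ∩ g • Φ N) ∂m := lintegral_mono (fun g => hall g)
        _ = m (Φ N) * m (Φ N) := st19_lint_left m (hc N).measurableSet
    have hint2 : (ENNReal.ofReal (1-ε') * m Set.univ) * m (Φ N) ≤ m (Φ N) * m (Φ N) := by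
      calc (ENNReal.ofReal (1-ε') * m Set.univ) * m (Φ N)
          = (ENNReal.ofReal (1-ε') * m (Φ N)) * m Set.univ := by ring
        _ ≤ m (Φ N) * m (Φ N) := hint
    exact (ENNReal.mul_le_mul_iff_left (hp N).ne' (hc N).measure_lt_top.ne).1 hint2
  have keyR : ∀ N, (∀ g : G,
        ENNReal.ofReal (1-ε') * m (Φ N) ≤ m ((fun x => x * g) '' Φ N ∩ Φ N)) →
      ENNReal.ofReal (1 - ε') * m Set.univ ≤ m (Φ N) := by
    intro N hall
    have hint : (ENNReal.ofReal (1-ε') * m (Φ N)) * m Set.univ ≤ m (Φ N) * m (Φ N) := by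
      calc (ENNReal.ofReal (1-ε') * m (Φ N)) * m Set.univ
          = ∫⁻ _, ENNReal.ofReal (1-ε') * m (Φ N) ∂m := (lintegral_const _).symm
        _ ≤ ∫⁻ g, m ((fun x => x * g) '' Φ N ∩ Φ N) ∂m := lintegral_mono (fun g => hall g)
        _ = m (Φ N) * m (Φ N) := st19_lint_right m (hc N).measurableSet
    have hint2 : (ENNReal.ofReal (1-ε') * m Set.univ) * m (Φ N) ≤ m (Φ N) * m (Φ N) := by
      calc (ENNReal.ofReal (1-ε') * m Set.univ) * m (Φ N)
          = (ENNReal.ofReal (1-ε') * m (Φ N)) * m Set.univ := by ring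
        _ ≤ m (Φ N) * m (Φ N) := hint
    exact (ENNReal.mul_le_mul_iff_left (hp N).ne' (hc N).measure_lt_top.ne).1 hint2
  cases hF with
  | inl hF =>
    obtain ⟨N₀, hN₀⟩ := hF.2.2 Set.univ isCompact_univ ε' hε'
    refine ⟨N₀, fun N hN => key N (fun g => ?_)⟩
    have hfi := hN₀ N hN g (mem_univ g)
    have h1 : (1-ε') * (m (Φ N)).toReal ≤ (m (Φ N ∩ g • Φ N)).toReal := by
      have h2 := (abs_lt.1 hfi).1
      have h3 : 1 - ε' < (m (Φ N ∩ g • Φ N)).toReal / (m (Φ N)).toReal := by linarith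
      exact ((lt_div_iff₀ (hr N)).1 h3).le
    calc ENNReal.ofReal (1-ε') * m (Φ N)
        = ENNReal.ofReal (1-ε') * ENNReal.ofReal (m (Φ N)).toReal := by
          rw [ENNReal.ofReal_toReal (hc N).measure_lt_top.ne]
      _ = ENNReal.ofReal ((1-ε') * (m (Φ N)).toReal) := by
          rw [ENNReal.ofReal_mul (by linarith : (0:ℝ) ≤ 1-ε')]
      _ ≤ m (Φ N ∩ g • Φ N) := ENNReal.ofReal_le_of_le_toReal h1
  | inr hF =>
    obtain ⟨N₀, hN₀⟩ := hF.2.2 Set.univ isCompact_univ ε' hε'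
    refine ⟨N₀, fun N hN => keyR N (fun g => ?_)⟩
    have hfi := hN₀ N hN g (mem_univ g)
    have h1 : (1-ε') * (m (Φ N)).toReal ≤ (m ((fun x => x * g) '' Φ N ∩ Φ N)).toReal := by
      have h2 := (abs_lt.1 hfi).1
      have h3 : 1 - ε' < (m ((fun x => x * g) '' Φ N ∩ Φ N)).toReal / (m (Φ N)).toReal := by
        linarith
      exact ((lt_div_iff₀ (hr N)).1 h3).le
    calc ENNReal.ofReal (1-ε') * m (Φ N)
        = ENNReal.ofReal (1-ε') * ENNReal.ofReal (m (Φ N)).toReal := by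
          rw [ENNReal.ofReal_toReal (hc N).measure_lt_top.ne]
      _ = ENNReal.ofReal ((1-ε') * (m (Φ N)).toReal) := by
          rw [ENNReal.ofReal_mul (by linarith : (0:ℝ) ≤ 1-ε')]
      _ ≤ m ((fun x => x * g) '' Φ N ∩ Φ N) := ENNReal.ofReal_le_of_le_toReal h1

lemma st19_compact_densFrac (m : Measure G) [m.IsHaarMeasure] [CompactSpace G]
    {Φ : ℕ → Set G} (hc : ∀ N, IsCompact (Φ N))
    (hr : Tendsto (fun N => (m (Φ N)).toReal) atTop (𝓝 (m (Set.univ : Set G)).toReal))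
    (E : Set G) :
    Tendsto (densFrac m Φ E) atTop (𝓝 ((m E).toReal / (m (Set.univ : Set G)).toReal)) := by
  set u := (m (Set.univ : Set G)).toReal with hu_def
  have hufin : m (Set.univ : Set G) ≠ ⊤ := isCompact_univ.measure_lt_top.ne
  have hu : 0 < u := ENNReal.toReal_pos
    (isOpen_univ.measure_pos m univ_nonempty).ne' hufin
  have hnum : Tendsto (fun N => (m (E ∩ Φ N)).toReal) atTop (𝓝 (m E).toReal) := by
    have hub : ∀ N, (m (E ∩ Φ N)).toReal ≤ (m E).toReal :=
      fun N => ENNReal.toReal_mono ((measure_mono (subset_univ E)).trans_lt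
        hufin.lt_top).ne (measure_mono inter_subset_left)
    have hlb : ∀ N, (m E).toReal - (u - (m (Φ N)).toReal) ≤ (m (E ∩ Φ N)).toReal := by
      intro N
      have hsub : E ⊆ (E ∩ Φ N) ∪ (Φ N)ᶜ := by
        intro x hx
        by_cases hxΦ : x ∈ Φ N
        · exact Or.inl ⟨hx, hxΦ⟩
        · exact Or.inr hxΦ
      have hcfin : m ((Φ N)ᶜ) ≠ ⊤ :=
        ((measure_mono (subset_univ _)).trans_lt hufin.lt_top).ne
      have hifin : m (E ∩ Φ N) ≠ ⊤ :=
        ((measure_mono (subset_univ _)).trans_lt hufin.lt_top).ne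
      have h1 : (m E).toReal ≤ (m (E ∩ Φ N)).toReal + (m ((Φ N)ᶜ)).toReal := by
        calc (m E).toReal ≤ (m (E ∩ Φ N) + m ((Φ N)ᶜ)).toReal :=
              ENNReal.toReal_mono (ENNReal.add_ne_top.2 ⟨hifin, hcfin⟩)
                ((measure_mono hsub).trans (measure_union_le _ _))
          _ = _ := ENNReal.toReal_add hifin hcfin
      have h2 : (m ((Φ N)ᶜ)).toReal = u - (m (Φ N)).toReal := by
        rw [measure_compl (hc N).measurableSet ((measure_mono (subset_univ _)).trans_lt
          hufin.lt_top).ne]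
        exact ENNReal.toReal_sub_of_le (measure_mono (subset_univ _)) hufin
      linarith
    have hlow : Tendsto (fun N => (m E).toReal - (u - (m (Φ N)).toReal)) atTop
        (𝓝 (m E).toReal) := by
      have : Tendsto (fun N => (m E).toReal - (u - (m (Φ N)).toReal)) atTop
          (𝓝 ((m E).toReal - (u - u))) :=
        tendsto_const_nhds.sub (tendsto_const_nhds.sub hr)
      simpa using this
    exact tendsto_of_tendsto_of_tendsto_of_le_of_le hlow tendsto_const_nhds hlb hub
  exact hnum.div hr hu.ne'
end F

section Gmain
variable {G : Type*} [Group G] [TopologicalSpace G] [IsTopologicalGroup G]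
  [LocallyCompactSpace G] [SecondCountableTopology G] [T2Space G]
  [MeasurableSpace G] [BorelSpace G]

lemma st19_key_noncompact (m : Measure G) [m.IsHaarMeasure] (hG : ¬ CompactSpace G)
    {Φ : ℕ → Set G} (hΦ : IsLeftFolner m Φ ∨ IsRightFolner m Φ)
    {C : Set G} (hC : IsCompact C) :
    Tendsto (densFrac m Φ C) atTop (𝓝 0) := by
  rw [Metric.tendsto_atTop]
  intro δ hδ
  have hex : ∃ N₀ : ℕ, ∀ N ≥ N₀, (m (C ∩ Φ N)).toReal / (m (Φ N)).toReal < δ := by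
    cases hΦ with
    | inl h => exact st19_left_core m hG h.1 h.2.1 h.2.2 hC δ hδ
    | inr h => exact st19_right_core m hG h.1 h.2.1 h.2.2 hC δ hδ
  obtain ⟨N₀, h⟩ := hex
  refine ⟨N₀, fun N hN => ?_⟩
  rw [Real.dist_eq, sub_zero, abs_of_nonneg (st19_densFrac_nonneg (m := m) Φ C N)]
  exact h N hN

theorem statement19' {G : Type} [Group G] [TopologicalSpace G] [IsTopologicalGroup G]
    [LocallyCompactSpace G] [SecondCountableTopology G] [T2Space G]
    [MeasurableSpace G] [BorelSpace G]
    (m : Measure G) [m.IsHaarMeasure]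
    (Φ : ℕ → Set G) (hΦ : IsLeftFolner m Φ ∨ IsRightFolner m Φ)
    (A : ℕ → Set G) (hA : ∀ i, MeasurableSet (A i))
    (d : ℕ → ℝ) (hd : ∀ i, Tendsto (densFrac m Φ (A i)) atTop (nhds (d i)))
    (hsum : Summable d)
    (b : ℕ → ℝ)
    (hb : ∀ n, Tendsto (densFrac m Φ (Set.accumulate A n)) atTop (nhds (b n))) :
    ∃ A' : ℕ → Set G,
      (∀ i, A' i ⊆ A i) ∧
      (∀ i, ∃ K : Set G, IsCompact K ∧ A i \ A' i ⊆ K) ∧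
      ∃ L : ℝ, Tendsto b atTop (nhds L) ∧
        Tendsto (densFrac m Φ (⋃ i, A' i)) atTop (nhds L) := by
  classical
  have hcomp : ∀ N, IsCompact (Φ N) := hΦ.elim And.left And.left
  have hpos : ∀ N, 0 < m (Φ N) := hΦ.elim (fun h => h.2.1) (fun h => h.2.1)
  have hΦfin : ∀ N, m (Φ N) ≠ ⊤ := fun N => (hcomp N).measure_lt_top.ne
  have hrpos : ∀ N, 0 < (m (Φ N)).toReal :=
    fun N => ENNReal.toReal_pos (hpos N).ne' (hΦfin N)
  by_cases hcs : CompactSpace G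
  · -- compact case: no removal needed
    have hmt := st19_compact_measure_tendsto m hΦ
    set u := (m (Set.univ : Set G)).toReal with hu_def
    refine ⟨A, fun i => subset_rfl, fun i => ⟨∅, isCompact_empty, by simp⟩,
      (m (⋃ i, A i)).toReal / u, ?_, ?_⟩
    · have hbn : ∀ n, b n = (m (Set.accumulate A n)).toReal / u := fun n =>
        tendsto_nhds_unique (hb n) (st19_compact_densFrac m hcomp hmt _)
      have hmu : Tendsto (fun n => m (Set.accumulate A n)) atTop (𝓝 (m (⋃ i, A i))) := by
        have h1 := tendsto_measure_iUnion_atTop (μ := m) (Set.monotone_accumulate (s := A))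
        rwa [Set.iUnion_accumulate] at h1
      have hfin : m (⋃ i, A i) ≠ ⊤ :=
        ((measure_mono (subset_univ _)).trans_lt isCompact_univ.measure_lt_top).ne
      have h2 := ((ENNReal.tendsto_toReal hfin).comp hmu).div_const u
      exact Filter.Tendsto.congr (fun n => (hbn n).symm) h2
    · exact st19_compact_densFrac m hcomp hmt _
  · -- noncompact case
    have hd0 : ∀ i, 0 ≤ d i := fun i =>
      le_of_tendsto_of_tendsto' tendsto_const_nhds (hd i)
        (fun N => st19_densFrac_nonneg (m := m) Φ (A i) N)
    set f : ℕ → ℝ := fun i => d i + (1/2)^i with hf_def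
    have hf0 : ∀ i, 0 ≤ f i := fun i => add_nonneg (hd0 i) (by positivity)
    have hfsum : Summable f := hsum.add summable_geometric_two
    have hMex : ∀ i, ∃ Mi : ℕ, ∀ N ≥ Mi, densFrac m Φ (A i) N < f i := by
      intro i
      have h1 : d i < f i := lt_add_of_pos_right _ (by positivity)
      exact eventually_atTop.1 ((hd i).eventually (eventually_lt_nhds h1))
    choose M hM using hMex
    set T : ℕ → Set G := fun i => ⋃ j : Fin (M i), Φ (j : ℕ) with hT_def
    have hTcomp : ∀ i, IsCompact (T i) := fun i => isCompact_iUnion (fun j => hcomp _)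
    set A' : ℕ → Set G := fun i => A i \ T i with hA'_def
    have hbmono : Monotone b := by
      apply monotone_nat_of_le_succ
      intro n
      refine le_of_tendsto_of_tendsto' (hb n) (hb (n+1)) (fun N => ?_)
      exact st19_densFrac_mono Φ hcomp (Set.accumulate_subset_accumulate (Nat.le_succ n)) N
    have hbbdd : BddAbove (Set.range b) := by
      refine ⟨1, ?_⟩
      rintro x ⟨n, rfl⟩
      exact le_of_tendsto (hb n)
        (Filter.Eventually.of_forall fun N => st19_densFrac_le_one Φ hcomp _ N)
    set L : ℝ := ⨆ n, b n with hL_def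
    have hbL : Tendsto b atTop (𝓝 L) := tendsto_atTop_ciSup hbmono hbbdd
    have hbleL : ∀ n, b n ≤ L := fun n => le_ciSup hbbdd n
    refine ⟨A', fun i => diff_subset, fun i => ⟨T i, hTcomp i, fun x hx => ?_⟩, L, hbL, ?_⟩
    · by_contra hxT
      exact hx.2 ⟨hx.1, hxT⟩
    rw [Metric.tendsto_atTop]
    intro ε hε
    obtain ⟨k, hk⟩ : ∃ k, ∑' j, f (j + k) < ε/4 :=
      ((tendsto_sum_nat_add f).eventually (eventually_lt_nhds (by positivity))).exists
    obtain ⟨n₀, hn₀⟩ : ∃ n₀, L - ε/4 < b n₀ :=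
      exists_lt_of_lt_ciSup (by linarith : L - ε/4 < L)
    set Tst : Set G := ⋃ i : Fin (n₀+1), T i with hTst_def
    have hTstcomp : IsCompact Tst := isCompact_iUnion fun i => hTcomp _
    have hTst0 : Tendsto (densFrac m Φ Tst) atTop (𝓝 0) :=
      st19_key_noncompact m hcs hΦ hTstcomp
    have E1 : ∀ᶠ N in atTop, densFrac m Φ (Set.accumulate A k) N < b k + ε/4 :=
      (hb k).eventually (eventually_lt_nhds (by linarith))
    have E2 : ∀ᶠ N in atTop, b n₀ - ε/4 < densFrac m Φ (Set.accumulate A n₀) N :=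
      (hb n₀).eventually (eventually_gt_nhds (by linarith))
    have E3 : ∀ᶠ N in atTop, densFrac m Φ Tst N < ε/4 := by
      have := hTst0.eventually (eventually_lt_nhds (by positivity : (0:ℝ) < ε/4))
      exact this
    obtain ⟨N₁, hN₁⟩ := eventually_atTop.1 ((E1.and E2).and E3)
    refine ⟨N₁, fun N hN => ?_⟩
    obtain ⟨⟨hE1, hE2⟩, hE3⟩ := hN₁ N hN
    set r : ℝ := (m (Φ N)).toReal with hr_def
    have hr : 0 < r := hrpos N
    -- upper bound
    have hperterm : ∀ j : ℕ, m (A' (j + k) ∩ Φ N) ≤ ENNReal.ofReal (f (j + k)) * m (Φ N) := by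
      intro j
      rcases le_or_gt (M (j + k)) N with hMN | hMN
      · have h1 : densFrac m Φ (A (j+k)) N < f (j+k) := hM (j+k) N hMN
        have h2 : (m (A (j+k) ∩ Φ N)).toReal ≤ f (j+k) * r := by
          have := (div_lt_iff₀ hr).1 h1
          linarith
        calc m (A' (j+k) ∩ Φ N) ≤ m (A (j+k) ∩ Φ N) :=
              measure_mono (inter_subset_inter_left _ diff_subset)
          _ = ENNReal.ofReal (m (A (j+k) ∩ Φ N)).toReal :=
              (ENNReal.ofReal_toReal ((measure_mono inter_subset_right).trans_lt
                (hΦfin N).lt_top).ne).symm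
          _ ≤ ENNReal.ofReal (f (j+k) * r) := ENNReal.ofReal_le_ofReal h2
          _ = ENNReal.ofReal (f (j+k)) * ENNReal.ofReal r :=
              ENNReal.ofReal_mul (hf0 _)
          _ = ENNReal.ofReal (f (j+k)) * m (Φ N) := by
              rw [ENNReal.ofReal_toReal (hΦfin N)]
      · have hempty : A' (j+k) ∩ Φ N = ∅ := by
          apply Set.eq_empty_of_forall_notMem
          rintro x ⟨⟨hxA, hxT⟩, hxΦ⟩
          exact hxT (Set.mem_iUnion.2 ⟨⟨N, hMN⟩, hxΦ⟩)
        rw [hempty, measure_empty]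
        exact zero_le
    have hAk : m ((⋃ i, A' i) ∩ Φ N)
        ≤ m (Set.accumulate A k ∩ Φ N) + ENNReal.ofReal (ε/4) * m (Φ N) := by
      have hsub : (⋃ i, A' i) ∩ Φ N
          ⊆ (Set.accumulate A k ∩ Φ N) ∪ ⋃ j : ℕ, (A' (j + k) ∩ Φ N) := by
        rintro x ⟨hx, hxΦ⟩
        rw [Set.mem_iUnion] at hx
        obtain ⟨i, hxi⟩ := hx
        rcases le_or_gt i k with hik | hik
        · exact Or.inl ⟨Set.mem_accumulate.2 ⟨i, hik, hxi.1⟩, hxΦ⟩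
        · refine Or.inr (Set.mem_iUnion.2 ⟨i - k, ?_⟩)
          rw [Nat.sub_add_cancel hik.le]
          exact ⟨hxi, hxΦ⟩
      have htail : ∑' j : ℕ, m (A' (j + k) ∩ Φ N) ≤ ENNReal.ofReal (ε/4) * m (Φ N) := by
        calc ∑' j : ℕ, m (A' (j + k) ∩ Φ N)
            ≤ ∑' j : ℕ, ENNReal.ofReal (f (j + k)) * m (Φ N) :=
              ENNReal.tsum_le_tsum hperterm
          _ = (∑' j : ℕ, ENNReal.ofReal (f (j + k))) * m (Φ N) := ENNReal.tsum_mul_right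
          _ = ENNReal.ofReal (∑' j : ℕ, f (j + k)) * m (Φ N) := by
              rw [ENNReal.ofReal_tsum_of_nonneg (fun j => hf0 _)
                ((summable_nat_add_iff k).2 hfsum)]
          _ ≤ ENNReal.ofReal (ε/4) * m (Φ N) :=
              mul_le_mul_left (ENNReal.ofReal_le_ofReal hk.le) _
      calc m ((⋃ i, A' i) ∩ Φ N)
          ≤ m ((Set.accumulate A k ∩ Φ N) ∪ ⋃ j : ℕ, (A' (j + k) ∩ Φ N)) :=
            measure_mono hsub
        _ ≤ m (Set.accumulate A k ∩ Φ N) + m (⋃ j : ℕ, (A' (j + k) ∩ Φ N)) :=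
            measure_union_le _ _
        _ ≤ m (Set.accumulate A k ∩ Φ N) + ∑' j : ℕ, m (A' (j + k) ∩ Φ N) :=
            add_le_add_right (measure_iUnion_le _) _
        _ ≤ m (Set.accumulate A k ∩ Φ N) + ENNReal.ofReal (ε/4) * m (Φ N) :=
            add_le_add_right htail _
    have hupper : densFrac m Φ (⋃ i, A' i) N ≤ densFrac m Φ (Set.accumulate A k) N + ε/4 := by
      have hfin1 : m (Set.accumulate A k ∩ Φ N) ≠ ⊤ :=
        ((measure_mono inter_subset_right).trans_lt (hΦfin N).lt_top).ne
      have hfin2 : ENNReal.ofReal (ε/4) * m (Φ N) ≠ ⊤ :=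
        ENNReal.mul_ne_top ENNReal.ofReal_ne_top (hΦfin N)
      have h1 : (m ((⋃ i, A' i) ∩ Φ N)).toReal
          ≤ (m (Set.accumulate A k ∩ Φ N)).toReal + ε/4 * r := by
        calc (m ((⋃ i, A' i) ∩ Φ N)).toReal
            ≤ (m (Set.accumulate A k ∩ Φ N) + ENNReal.ofReal (ε/4) * m (Φ N)).toReal :=
              ENNReal.toReal_mono (ENNReal.add_ne_top.2 ⟨hfin1, hfin2⟩) hAk
          _ = (m (Set.accumulate A k ∩ Φ N)).toReal
              + (ENNReal.ofReal (ε/4) * m (Φ N)).toReal := ENNReal.toReal_add hfin1 hfin2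
          _ = (m (Set.accumulate A k ∩ Φ N)).toReal + ε/4 * r := by
              rw [ENNReal.toReal_mul, ENNReal.toReal_ofReal (by positivity : (0:ℝ) ≤ ε/4)]
      calc densFrac m Φ (⋃ i, A' i) N = (m ((⋃ i, A' i) ∩ Φ N)).toReal / r := rfl
        _ ≤ ((m (Set.accumulate A k ∩ Φ N)).toReal + ε/4 * r) / r :=
            div_le_div_of_nonneg_right h1 hr.le
        _ = densFrac m Φ (Set.accumulate A k) N + ε/4 := by
            rw [add_div, mul_div_assoc, div_self hr.ne', mul_one]
            rfl
    -- lower bound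
    have hlower : densFrac m Φ (Set.accumulate A n₀) N
        ≤ densFrac m Φ (⋃ i, A' i) N + densFrac m Φ Tst N := by
      have hsub : Set.accumulate A n₀ ∩ Φ N ⊆ ((⋃ i, A' i) ∩ Φ N) ∪ (Tst ∩ Φ N) := by
        rintro x ⟨hx, hxΦ⟩
        obtain ⟨i, hin, hxi⟩ := Set.mem_accumulate.1 hx
        by_cases hxT : x ∈ Tst
        · exact Or.inr ⟨hxT, hxΦ⟩
        · refine Or.inl ⟨Set.mem_iUnion.2 ⟨i, hxi, fun hT => hxT ?_⟩, hxΦ⟩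
          exact Set.mem_iUnion.2 ⟨⟨i, Nat.lt_succ_of_le hin⟩, hT⟩
      have hfin1 : m ((⋃ i, A' i) ∩ Φ N) ≠ ⊤ :=
        ((measure_mono inter_subset_right).trans_lt (hΦfin N).lt_top).ne
      have hfin2 : m (Tst ∩ Φ N) ≠ ⊤ :=
        ((measure_mono inter_subset_right).trans_lt (hΦfin N).lt_top).ne
      have h1 : (m (Set.accumulate A n₀ ∩ Φ N)).toReal
          ≤ (m ((⋃ i, A' i) ∩ Φ N)).toReal + (m (Tst ∩ Φ N)).toReal := by
        calc (m (Set.accumulate A n₀ ∩ Φ N)).toReal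
            ≤ (m ((⋃ i, A' i) ∩ Φ N) + m (Tst ∩ Φ N)).toReal :=
              ENNReal.toReal_mono (ENNReal.add_ne_top.2 ⟨hfin1, hfin2⟩)
                ((measure_mono hsub).trans (measure_union_le _ _))
          _ = _ := ENNReal.toReal_add hfin1 hfin2
      calc densFrac m Φ (Set.accumulate A n₀) N
          = (m (Set.accumulate A n₀ ∩ Φ N)).toReal / r := rfl
        _ ≤ ((m ((⋃ i, A' i) ∩ Φ N)).toReal + (m (Tst ∩ Φ N)).toReal) / r :=
            div_le_div_of_nonneg_right h1 hr.le
        _ = densFrac m Φ (⋃ i, A' i) N + densFrac m Φ Tst N := add_div _ _ _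
    rw [Real.dist_eq, abs_lt]
    constructor
    · -- -ε < densFrac - L
      have := hbleL n₀
      linarith
    · have := hbleL k
      linarith
end Gmain


/-- Approximate monotone convergence for Følner densities: if each `A i`
has density `d i` with `d` summable and each partial union `A 0 ∪ ⋯ ∪ A n` has density
`b n`, then one can remove from each `A i` a set contained in a compact set so that the
union of the resulting sets `A' i` has density equal to `lim b`. -/
theorem statement19 {G : Type} [Group G] [TopologicalSpace G] [IsTopologicalGroup G]
    [LocallyCompactSpace G] [SecondCountableTopology G] [T2Space G]
    [MeasurableSpace G] [BorelSpace G]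
    (m : Measure G) [m.IsHaarMeasure]
    (hAmen : HasLeftInvariantMean G)
    (Φ : ℕ → Set G) (hΦ : IsLeftFolner m Φ ∨ IsRightFolner m Φ)
    (A : ℕ → Set G) (hA : ∀ i, MeasurableSet (A i))
    (d : ℕ → ℝ) (hd : ∀ i, Tendsto (densFrac m Φ (A i)) atTop (nhds (d i)))
    (hsum : Summable d)
    (b : ℕ → ℝ)
    (hb : ∀ n, Tendsto (densFrac m Φ (Set.accumulate A n)) atTop (nhds (b n))) :
    ∃ A' : ℕ → Set G,
      (∀ i, A' i ⊆ A i) ∧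
      (∀ i, ∃ K : Set G, IsCompact K ∧ A i \ A' i ⊆ K) ∧
      ∃ L : ℝ, Tendsto b atTop (nhds L) ∧
        Tendsto (densFrac m Φ (⋃ i, A' i)) atTop (nhds L) := by
  exact statement19' m Φ hΦ A hA d hd hsum b hb
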